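/- Assume the positivity condition: l_j − L_j(τ) > 0 for every τ ∈ ℝ^ℓ and every j. Then the Kähler potential K_λ is a strictly convex function on ℝ^ℓ. -/

import Mathlib

open Real Finset

noncomputable section

/-- `K(t) = log(1 + e^{2t})`. -/
def Kfun (t : ℝ) : ℝ := Real.log (1 + Real.exp (2 * t))

/-- `𝒥(t) = e^{2t}/(1 + e^{2t})`. -/
def Jfun (t : ℝ) : ℝ := Real.exp (2 * t) / (1 + Real.exp (2 * t))

/-- The coordinate change `Φ(σ)_i = σ_i + (1/2)·Σ_{j>i} c_{ji} K(σ_j)`. -/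
def Phi {ℓ : ℕ} (c : Fin ℓ → Fin ℓ → ℤ) (σ : Fin ℓ → ℝ) : Fin ℓ → ℝ :=
  fun i => σ i + (1 / 2) * ∑ j ∈ Finset.univ.filter (fun j => i < j), (c j i : ℝ) * Kfun (σ j)

/-- The inverse of the coordinate change `Φ`. -/
def PhiInv {ℓ : ℕ} (c : Fin ℓ → Fin ℓ → ℤ) : (Fin ℓ → ℝ) → (Fin ℓ → ℝ) :=
  Function.invFun (Phi c)

/-- The Kähler potential `K_λ(τ) = Σ_i l_i K(τ̃_i)`, where `τ̃ = Φ⁻¹(τ)`. -/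
def Klam {ℓ : ℕ} (l : Fin ℓ → ℤ) (c : Fin ℓ → Fin ℓ → ℤ) (τ : Fin ℓ → ℝ) : ℝ :=
  ∑ i, (l i : ℝ) * Kfun (PhiInv c τ i)

/-- The action variables `J_j(τ) = (1/2)·∂K_λ/∂τ_j`. -/
def Jact {ℓ : ℕ} (l : Fin ℓ → ℤ) (c : Fin ℓ → Fin ℓ → ℤ) (j : Fin ℓ) (τ : Fin ℓ → ℝ) : ℝ :=
  (1 / 2) * fderiv ℝ (Klam l c) τ (Pi.single j 1)

/-- `L_j(τ) = Σ_{i<j} c_{ji} J_i(τ)`. -/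
def Lfun {ℓ : ℕ} (l : Fin ℓ → ℤ) (c : Fin ℓ → Fin ℓ → ℤ) (j : Fin ℓ) (τ : Fin ℓ → ℝ) : ℝ :=
  ∑ i ∈ Finset.univ.filter (fun i => i < j), (c j i : ℝ) * Jact l c i τ


lemma one_add_exp_pos (t : ℝ) : 0 < 1 + Real.exp (2 * t) := by positivity

lemma Jfun_pos (t : ℝ) : 0 < Jfun t :=
  div_pos (Real.exp_pos _) (one_add_exp_pos t)

lemma Jfun_lt_one (t : ℝ) : Jfun t < 1 := by
  rw [Jfun, div_lt_one (one_add_exp_pos t)]; linarith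

def Jd (t : ℝ) : ℝ := 2 * Jfun t * (1 - Jfun t)

lemma Jd_pos (t : ℝ) : 0 < Jd t := by
  have h1 := Jfun_pos t; have h2 := Jfun_lt_one t
  have h3 : 0 < 1 - Jfun t := by linarith
  have : 0 < 2 * Jfun t := by linarith
  exact mul_pos this h3

lemma hasDerivAt_two_mul (t : ℝ) : HasDerivAt (fun t : ℝ => 2 * t) 2 t := by
  simpa using (hasDerivAt_id t).const_mul (2:ℝ)

lemma hasDerivAt_exp2 (t : ℝ) : HasDerivAt (fun t : ℝ => Real.exp (2 * t))
    (2 * Real.exp (2 * t)) t := by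
  have h := (Real.hasDerivAt_exp (2 * t)).comp t (hasDerivAt_two_mul t)
  have h2 : HasDerivAt (fun t : ℝ => Real.exp (2 * t)) (Real.exp (2 * t) * 2) t := by
    simpa [Function.comp_def] using h
  simpa [mul_comm] using h2

lemma hasDerivAt_Kfun (t : ℝ) : HasDerivAt Kfun (2 * Jfun t) t := by
  have h1 : HasDerivAt (fun t : ℝ => 1 + Real.exp (2 * t)) (2 * Real.exp (2 * t)) t :=
    (hasDerivAt_exp2 t).const_add 1
  have h2 := (Real.hasDerivAt_log (one_add_exp_pos t).ne').comp t h1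
  have : HasDerivAt Kfun ((1 + Real.exp (2*t))⁻¹ * (2 * Real.exp (2*t))) t := by
    exact h2
  convert this using 1
  rw [Jfun]
  field_simp

lemma hasDerivAt_Jfun (t : ℝ) : HasDerivAt Jfun (Jd t) t := by
  have h1 := hasDerivAt_exp2 t
  have h2 : HasDerivAt (fun t : ℝ => 1 + Real.exp (2 * t)) (2 * Real.exp (2 * t)) t :=
    h1.const_add 1
  have h3 := h1.div h2 (one_add_exp_pos t).ne'
  refine h3.congr_deriv ?_
  rw [Jd, Jfun]
  have hne := (one_add_exp_pos t).ne'
  field_simp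

variable {ℓ : ℕ}

/-- The explicit inverse of `Phi`, defined by downward recursion. -/
def sig (c : Fin ℓ → Fin ℓ → ℤ) (τ : Fin ℓ → ℝ) (i : Fin ℓ) : ℝ :=
  τ i - (1 / 2) * ∑ j ∈ (Finset.univ.filter (fun j => i < j)).attach,
    (c j.1 i : ℝ) * Kfun (sig c τ j.1)
termination_by ℓ - i.1
decreasing_by
  have hj : i < j.1 := (Finset.mem_filter.mp j.2).2
  have := j.1.isLt
  omega

lemma sig_eq (c : Fin ℓ → Fin ℓ → ℤ) (τ : Fin ℓ → ℝ) (i : Fin ℓ) :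
    sig c τ i = τ i - (1 / 2) * ∑ j ∈ Finset.univ.filter (fun j => i < j),
      (c j i : ℝ) * Kfun (sig c τ j) := by
  rw [sig, Finset.sum_attach _ (fun j => (c j i : ℝ) * Kfun (sig c τ j))]

/-- `m_j = l_j - ∑_{i<j} c_{ji} m_i 𝒥(σ_i)`, defined by recursion on `j`. -/
def mrec (l : Fin ℓ → ℤ) (c : Fin ℓ → Fin ℓ → ℤ) (τ : Fin ℓ → ℝ) (j : Fin ℓ) : ℝ :=
  (l j : ℝ) - ∑ i ∈ (Finset.univ.filter (fun i => i < j)).attach,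
    (c j i.1 : ℝ) * (mrec l c τ i.1 * Jfun (sig c τ i.1))
termination_by j.1
decreasing_by
  exact (Finset.mem_filter.mp i.2).2

lemma mrec_eq (l : Fin ℓ → ℤ) (c : Fin ℓ → Fin ℓ → ℤ) (τ : Fin ℓ → ℝ) (j : Fin ℓ) :
    mrec l c τ j = (l j : ℝ) - ∑ i ∈ Finset.univ.filter (fun i => i < j),
      (c j i : ℝ) * (mrec l c τ i * Jfun (sig c τ i)) := by
  rw [mrec, Finset.sum_attach _ (fun i => (c j i : ℝ) * (mrec l c τ i * Jfun (sig c τ i)))]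

/-- The Fréchet derivative of `sig · i`. -/
def sigD (c : Fin ℓ → Fin ℓ → ℤ) (τ : Fin ℓ → ℝ) (i : Fin ℓ) : (Fin ℓ → ℝ) →L[ℝ] ℝ :=
  ContinuousLinearMap.proj i - ∑ j ∈ (Finset.univ.filter (fun j => i < j)).attach,
    ((c j.1 i : ℝ) * Jfun (sig c τ j.1)) • sigD c τ j.1
termination_by ℓ - i.1
decreasing_by
  have hj : i < j.1 := (Finset.mem_filter.mp j.2).2
  have := j.1.isLt
  omega

lemma sigD_apply (c : Fin ℓ → Fin ℓ → ℤ) (τ : Fin ℓ → ℝ) (i : Fin ℓ) (u : Fin ℓ → ℝ) :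
    sigD c τ i u = u i - ∑ j ∈ Finset.univ.filter (fun j => i < j),
      (c j i : ℝ) * Jfun (sig c τ j) * sigD c τ j u := by
  rw [sigD]
  rw [ContinuousLinearMap.sub_apply, ContinuousLinearMap.sum_apply,
    ContinuousLinearMap.proj_apply]
  congr 1
  rw [← Finset.sum_attach (Finset.univ.filter (fun j => i < j))
    (fun j => (c j i : ℝ) * Jfun (sig c τ j) * sigD c τ j u)]
  exact Finset.sum_congr rfl fun j _ => by
    rw [ContinuousLinearMap.smul_apply, smul_eq_mul]

lemma Phi_sig (c : Fin ℓ → Fin ℓ → ℤ) (τ : Fin ℓ → ℝ) : Phi c (sig c τ) = τ := by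
  funext i
  rw [Phi, sig_eq]
  ring

lemma sig_Phi (c : Fin ℓ → Fin ℓ → ℤ) (σ : Fin ℓ → ℝ) : sig c (Phi c σ) = σ := by
  suffices h : ∀ n, ∀ i : Fin ℓ, ℓ - i.1 ≤ n → sig c (Phi c σ) i = σ i by
    funext i; exact h ℓ i (by omega)
  intro n
  induction n with
  | zero => intro i h; have := i.isLt; omega
  | succ n ih =>
    intro i _
    rw [sig_eq]
    have hsum : ∀ j ∈ Finset.univ.filter (fun j => i < j),
        (c j i : ℝ) * Kfun (sig c (Phi c σ) j) = (c j i : ℝ) * Kfun (σ j) := by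
      intro j hj
      have hij : i < j := (Finset.mem_filter.mp hj).2
      have hij' : i.1 < j.1 := hij
      rw [ih j (by have := j.isLt; omega)]
    rw [Finset.sum_congr rfl hsum]
    show Phi c σ i - _ = σ i
    rw [Phi]
    ring


lemma Phi_injective (c : Fin ℓ → Fin ℓ → ℤ) : Function.Injective (Phi c) :=
  Function.LeftInverse.injective (g := sig c) (fun σ => sig_Phi c σ)

lemma PhiInv_eq (c : Fin ℓ → Fin ℓ → ℤ) (τ : Fin ℓ → ℝ) : PhiInv c τ = sig c τ := by
  have h : Phi c (sig c τ) = τ := Phi_sig c τ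
  have h2 : Phi c (PhiInv c τ) = τ := by
    rw [PhiInv]; exact Function.invFun_eq ⟨sig c τ, h⟩
  exact Phi_injective c (h2.trans h.symm)

lemma Klam_eq (l : Fin ℓ → ℤ) (c : Fin ℓ → Fin ℓ → ℤ) (τ : Fin ℓ → ℝ) :
    Klam l c τ = ∑ i, (l i : ℝ) * Kfun (sig c τ i) := by
  rw [Klam]
  exact Finset.sum_congr rfl fun i _ => by rw [PhiInv_eq]

lemma hasFDerivAt_sig (c : Fin ℓ → Fin ℓ → ℤ) :
    ∀ (i : Fin ℓ) (τ : Fin ℓ → ℝ), HasFDerivAt (fun τ => sig c τ i) (sigD c τ i) τ := by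
  suffices h : ∀ n (i : Fin ℓ), ℓ - i.1 ≤ n → ∀ τ : Fin ℓ → ℝ,
      HasFDerivAt (fun τ => sig c τ i) (sigD c τ i) τ by
    intro i τ; exact h ℓ i (by omega) τ
  intro n
  induction n with
  | zero => intro i h; have := i.isLt; omega
  | succ n ih =>
    intro i _ τ
    have hfun : (fun τ : Fin ℓ → ℝ => sig c τ i) = (fun τ : Fin ℓ → ℝ =>
        τ i - (1 / 2) * ∑ j ∈ Finset.univ.filter (fun j => i < j),
          (c j i : ℝ) * Kfun (sig c τ j)) := funext fun τ => sig_eq c τ i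
    rw [hfun]
    have hsum : HasFDerivAt (fun τ : Fin ℓ → ℝ =>
        ∑ j ∈ Finset.univ.filter (fun j => i < j), (c j i : ℝ) * Kfun (sig c τ j))
        (∑ j ∈ Finset.univ.filter (fun j => i < j),
          (c j i : ℝ) • ((2 * Jfun (sig c τ j)) • sigD c τ j)) τ := by
      apply HasFDerivAt.fun_sum
      intro j hj
      have hij : i < j := (Finset.mem_filter.mp hj).2
      have hij' : i.1 < j.1 := hij
      have hj' : HasFDerivAt (fun τ => sig c τ j) (sigD c τ j) τ :=
        ih j (by have := j.isLt; omega) τ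
      have h := ((hasDerivAt_Kfun (sig c τ j)).comp_hasFDerivAt τ hj').const_mul ((c j i : ℝ))
      simpa [Function.comp_def] using h
    have hproj : HasFDerivAt (fun τ : Fin ℓ → ℝ => τ i)
        (ContinuousLinearMap.proj i : (Fin ℓ → ℝ) →L[ℝ] ℝ) τ :=
      (hasFDerivAt_apply i τ)
    have h := hproj.sub (hsum.const_mul (1 / 2 : ℝ))
    refine h.congr_fderiv ?_
    apply ContinuousLinearMap.ext
    intro u
    rw [sigD_apply]
    simp only [ContinuousLinearMap.sub_apply, ContinuousLinearMap.smul_apply,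
      ContinuousLinearMap.coe_sum', Finset.sum_apply, ContinuousLinearMap.proj_apply,
      smul_eq_mul]
    congr 1
    rw [Finset.mul_sum]
    exact Finset.sum_congr rfl fun j _ => by ring

def KD (l : Fin ℓ → ℤ) (c : Fin ℓ → Fin ℓ → ℤ) (τ : Fin ℓ → ℝ) : (Fin ℓ → ℝ) →L[ℝ] ℝ :=
  ∑ i, (l i : ℝ) • ((2 * Jfun (sig c τ i)) • sigD c τ i)

lemma hasFDerivAt_Klam (l : Fin ℓ → ℤ) (c : Fin ℓ → Fin ℓ → ℤ) (τ : Fin ℓ → ℝ) :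
    HasFDerivAt (Klam l c) (KD l c τ) τ := by
  have hfun : Klam l c = fun τ => ∑ i, (l i : ℝ) * Kfun (sig c τ i) :=
    funext (Klam_eq l c)
  rw [hfun, KD]
  apply HasFDerivAt.fun_sum
  intro i _
  have h := ((hasDerivAt_Kfun (sig c τ i)).comp_hasFDerivAt τ
    (hasFDerivAt_sig c i τ)).const_mul ((l i : ℝ))
  simpa [Function.comp_def] using h


lemma swap_lemma (l : Fin ℓ → ℤ) (c : Fin ℓ → Fin ℓ → ℤ) (τ : Fin ℓ → ℝ) (A : Fin ℓ → ℝ) :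
    ∑ i, mrec l c τ i * Jfun (sig c τ i) *
      (∑ j ∈ Finset.univ.filter (fun j => i < j), (c j i : ℝ) * A j)
    = ∑ j, ((l j : ℝ) - mrec l c τ j) * A j := by
  have h1 : ∀ i : Fin ℓ, mrec l c τ i * Jfun (sig c τ i) *
      (∑ j ∈ Finset.univ.filter (fun j => i < j), (c j i : ℝ) * A j)
      = ∑ j ∈ Finset.univ.filter (fun j => i < j),
          mrec l c τ i * Jfun (sig c τ i) * ((c j i : ℝ) * A j) := fun i =>
    Finset.mul_sum _ _ _
  rw [Finset.sum_congr rfl fun i _ => h1 i]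
  rw [Finset.sum_comm' (s := Finset.univ) (t := fun i => Finset.univ.filter (fun j => i < j))
    (t' := Finset.univ) (s' := fun j => Finset.univ.filter (fun i => i < j))
    (by intro i j; simp)]
  refine Finset.sum_congr rfl fun j _ => ?_
  have : ∑ i ∈ Finset.univ.filter (fun i => i < j),
      mrec l c τ i * Jfun (sig c τ i) * ((c j i : ℝ) * A j)
      = (∑ i ∈ Finset.univ.filter (fun i => i < j),
          (c j i : ℝ) * (mrec l c τ i * Jfun (sig c τ i))) * A j := by
    rw [Finset.sum_mul]
    exact Finset.sum_congr rfl fun i _ => by ring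
  rw [this]
  have h2 : ∑ i ∈ Finset.univ.filter (fun i => i < j),
      (c j i : ℝ) * (mrec l c τ i * Jfun (sig c τ i)) = (l j : ℝ) - mrec l c τ j := by
    have := mrec_eq l c τ j
    linarith
  rw [h2]

lemma key_lemma (l : Fin ℓ → ℤ) (c : Fin ℓ → Fin ℓ → ℤ) (τ : Fin ℓ → ℝ)
    (D uvec : Fin ℓ → ℝ)
    (hD : ∀ i, D i = uvec i - ∑ j ∈ Finset.univ.filter (fun j => i < j),
      (c j i : ℝ) * Jfun (sig c τ j) * D j) :
    ∑ i, (l i : ℝ) * Jfun (sig c τ i) * D i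
      = ∑ i, mrec l c τ i * Jfun (sig c τ i) * uvec i := by
  have h1 : ∑ i, mrec l c τ i * Jfun (sig c τ i) * D i
      = ∑ i, mrec l c τ i * Jfun (sig c τ i) * uvec i
        - ∑ i, mrec l c τ i * Jfun (sig c τ i) *
            (∑ j ∈ Finset.univ.filter (fun j => i < j),
              (c j i : ℝ) * (Jfun (sig c τ j) * D j)) := by
    rw [← Finset.sum_sub_distrib]
    refine Finset.sum_congr rfl fun i _ => ?_
    rw [hD i]
    rw [show ∑ j ∈ Finset.univ.filter (fun j => i < j),
        (c j i : ℝ) * Jfun (sig c τ j) * D j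
      = ∑ j ∈ Finset.univ.filter (fun j => i < j),
        (c j i : ℝ) * (Jfun (sig c τ j) * D j) from
      Finset.sum_congr rfl fun j _ => by ring]
    ring
  rw [swap_lemma l c τ (fun j => Jfun (sig c τ j) * D j)] at h1
  have h2 : ∑ i, ((l i : ℝ) - mrec l c τ i) * (Jfun (sig c τ i) * D i)
      = ∑ i, (l i : ℝ) * Jfun (sig c τ i) * D i
        - ∑ i, mrec l c τ i * Jfun (sig c τ i) * D i := by
    rw [← Finset.sum_sub_distrib]
    exact Finset.sum_congr rfl fun i _ => by ring
  rw [h2] at h1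
  linarith

lemma Jact_eq (l : Fin ℓ → ℤ) (c : Fin ℓ → Fin ℓ → ℤ) (j : Fin ℓ) (τ : Fin ℓ → ℝ) :
    Jact l c j τ = mrec l c τ j * Jfun (sig c τ j) := by
  have hK : fderiv ℝ (Klam l c) τ = KD l c τ := (hasFDerivAt_Klam l c τ).fderiv
  rw [Jact, hK]
  have happ : (KD l c τ) (Pi.single j 1)
      = ∑ i, (l i : ℝ) * (2 * Jfun (sig c τ i)) * sigD c τ i (Pi.single j 1) := by
    rw [KD, ContinuousLinearMap.sum_apply]
    refine Finset.sum_congr rfl fun i _ => ?_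
    rw [ContinuousLinearMap.smul_apply, ContinuousLinearMap.smul_apply]
    simp [smul_eq_mul]; ring
  rw [happ]
  have hkey := key_lemma l c τ (fun i => sigD c τ i (Pi.single j 1)) (Pi.single j 1)
    (fun i => sigD_apply c τ i (Pi.single j 1))
  have h2 : ∑ i, (l i : ℝ) * (2 * Jfun (sig c τ i)) * sigD c τ i (Pi.single j 1)
      = 2 * ∑ i, (l i : ℝ) * Jfun (sig c τ i) * sigD c τ i (Pi.single j 1) := by
    rw [Finset.mul_sum]
    exact Finset.sum_congr rfl fun i _ => by ring
  rw [h2, hkey]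
  have h3 : ∑ i, mrec l c τ i * Jfun (sig c τ i) * (Pi.single j 1 : Fin ℓ → ℝ) i
      = mrec l c τ j * Jfun (sig c τ j) := by
    rw [Finset.sum_eq_single j]
    · simp
    · intro i _ hij
      simp [Pi.single_apply, hij]
    · intro h; exact absurd (Finset.mem_univ j) h
  rw [h3]
  ring

lemma mrec_eq_sub (l : Fin ℓ → ℤ) (c : Fin ℓ → Fin ℓ → ℤ) (τ : Fin ℓ → ℝ) (j : Fin ℓ) :
    mrec l c τ j = (l j : ℝ) - Lfun l c j τ := by
  rw [mrec_eq, Lfun]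
  congr 1
  exact Finset.sum_congr rfl fun i _ => by rw [Jact_eq]


/-- Second derivative data along a line. -/
def sdd (c : Fin ℓ → Fin ℓ → ℤ) (x u : Fin ℓ → ℝ) (t : ℝ) (i : Fin ℓ) : ℝ :=
  -∑ j ∈ (Finset.univ.filter (fun j => i < j)).attach, (c j.1 i : ℝ) *
    (Jd (sig c (x + t • u) j.1) * sigD c (x + t • u) j.1 u * sigD c (x + t • u) j.1 u
      + Jfun (sig c (x + t • u) j.1) * sdd c x u t j.1)
termination_by ℓ - i.1
decreasing_by
  have hj : i < j.1 := (Finset.mem_filter.mp j.2).2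
  have := j.1.isLt
  omega

lemma sdd_eq (c : Fin ℓ → Fin ℓ → ℤ) (x u : Fin ℓ → ℝ) (t : ℝ) (i : Fin ℓ) :
    sdd c x u t i = -∑ j ∈ Finset.univ.filter (fun j => i < j), (c j i : ℝ) *
      (Jd (sig c (x + t • u) j) * sigD c (x + t • u) j u * sigD c (x + t • u) j u
        + Jfun (sig c (x + t • u) j) * sdd c x u t j) := by
  rw [sdd, Finset.sum_attach _ (fun j => (c j i : ℝ) *
    (Jd (sig c (x + t • u) j) * sigD c (x + t • u) j u * sigD c (x + t • u) j u
      + Jfun (sig c (x + t • u) j) * sdd c x u t j))]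

lemma hasDerivAt_line (x u : Fin ℓ → ℝ) (t : ℝ) :
    HasDerivAt (fun t : ℝ => x + t • u) u t := by
  have h : HasDerivAt (fun t : ℝ => t • u) ((1 : ℝ) • u) t :=
    (hasDerivAt_id t).smul_const u
  simpa using h.const_add x

lemma hasDerivAt_s (c : Fin ℓ → Fin ℓ → ℤ) (x u : Fin ℓ → ℝ) (i : Fin ℓ) (t : ℝ) :
    HasDerivAt (fun t : ℝ => sig c (x + t • u) i) (sigD c (x + t • u) i u) t :=
  by have hc := (hasFDerivAt_sig c i (x + t • u)).comp_hasDerivAt t (hasDerivAt_line x u t); exact hc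

lemma hasDerivAt_sdot (c : Fin ℓ → Fin ℓ → ℤ) (x u : Fin ℓ → ℝ) :
    ∀ (i : Fin ℓ) (t : ℝ),
      HasDerivAt (fun t : ℝ => sigD c (x + t • u) i u) (sdd c x u t i) t := by
  suffices h : ∀ n (i : Fin ℓ), ℓ - i.1 ≤ n → ∀ t : ℝ,
      HasDerivAt (fun t : ℝ => sigD c (x + t • u) i u) (sdd c x u t i) t by
    intro i t; exact h ℓ i (by omega) t
  intro n
  induction n with
  | zero => intro i h; have := i.isLt; omega
  | succ n ih =>
    intro i _ t
    have hfun : (fun t : ℝ => sigD c (x + t • u) i u) = (fun t : ℝ =>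
        u i - ∑ j ∈ Finset.univ.filter (fun j => i < j),
          (c j i : ℝ) * Jfun (sig c (x + t • u) j) * sigD c (x + t • u) j u) :=
      funext fun t => sigD_apply c (x + t • u) i u
    rw [hfun]
    have hsum : HasDerivAt (fun t : ℝ =>
        ∑ j ∈ Finset.univ.filter (fun j => i < j),
          (c j i : ℝ) * Jfun (sig c (x + t • u) j) * sigD c (x + t • u) j u)
        (∑ j ∈ Finset.univ.filter (fun j => i < j),
          ((c j i : ℝ) * (Jd (sig c (x + t • u) j) * sigD c (x + t • u) j u)
              * sigD c (x + t • u) j u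
            + (c j i : ℝ) * Jfun (sig c (x + t • u) j) * sdd c x u t j)) t := by
      apply HasDerivAt.fun_sum
      intro j hj
      have hij : i < j := (Finset.mem_filter.mp hj).2
      have hij' : i.1 < j.1 := hij
      have hJ : HasDerivAt (fun t : ℝ => Jfun (sig c (x + t • u) j))
          (Jd (sig c (x + t • u) j) * sigD c (x + t • u) j u) t :=
        by have hc := (hasDerivAt_Jfun (sig c (x + t • u) j)).comp t (hasDerivAt_s c x u j t); exact hc
      have hsd := ih j (by have := j.isLt; omega) t
      exact ((hJ.const_mul ((c j i : ℝ))).mul hsd)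
    have h := hsum.const_sub (u i)
    refine h.congr_deriv ?_
    rw [sdd_eq, neg_inj]
    exact Finset.sum_congr rfl fun j _ => by ring


lemma hasDerivAt_g (l : Fin ℓ → ℤ) (c : Fin ℓ → Fin ℓ → ℤ) (x u : Fin ℓ → ℝ) (t : ℝ) :
    HasDerivAt (fun t : ℝ => Klam l c (x + t • u))
      (∑ i, 2 * (l i : ℝ) * Jfun (sig c (x + t • u) i) * sigD c (x + t • u) i u) t := by
  have hfun : (fun t : ℝ => Klam l c (x + t • u))
      = fun t : ℝ => ∑ i, (l i : ℝ) * Kfun (sig c (x + t • u) i) :=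
    funext fun t => Klam_eq l c (x + t • u)
  rw [hfun]
  have h := HasDerivAt.fun_sum (u := Finset.univ)
    (A := fun (i : Fin ℓ) (t : ℝ) => (l i : ℝ) * Kfun (sig c (x + t • u) i))
    (A' := fun i => (l i : ℝ) * (2 * Jfun (sig c (x + t • u) i) * sigD c (x + t • u) i u))
    (fun i _ => by
      have hK : HasDerivAt (fun t : ℝ => Kfun (sig c (x + t • u) i))
          (2 * Jfun (sig c (x + t • u) i) * sigD c (x + t • u) i u) t :=
        by have hc := (hasDerivAt_Kfun (sig c (x + t • u) i)).comp t (hasDerivAt_s c x u i t); exact hc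
      exact hK.const_mul ((l i : ℝ)))
  refine h.congr_deriv ?_
  exact Finset.sum_congr rfl fun i _ => by ring

lemma hasDerivAt_g1 (l : Fin ℓ → ℤ) (c : Fin ℓ → Fin ℓ → ℤ) (x u : Fin ℓ → ℝ) (t : ℝ) :
    HasDerivAt (fun t : ℝ =>
        ∑ i, 2 * (l i : ℝ) * Jfun (sig c (x + t • u) i) * sigD c (x + t • u) i u)
      (∑ i, 2 * (l i : ℝ) *
        (Jd (sig c (x + t • u) i) * sigD c (x + t • u) i u * sigD c (x + t • u) i u
          + Jfun (sig c (x + t • u) i) * sdd c x u t i)) t := by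
  have h := HasDerivAt.fun_sum (u := Finset.univ)
    (A := fun (i : Fin ℓ) (t : ℝ) =>
      2 * (l i : ℝ) * Jfun (sig c (x + t • u) i) * sigD c (x + t • u) i u)
    (A' := fun i =>
      2 * (l i : ℝ) * (Jd (sig c (x + t • u) i) * sigD c (x + t • u) i u)
          * sigD c (x + t • u) i u
        + 2 * (l i : ℝ) * Jfun (sig c (x + t • u) i) * sdd c x u t i)
    (fun i _ => by
      have hJ : HasDerivAt (fun t : ℝ => Jfun (sig c (x + t • u) i))
          (Jd (sig c (x + t • u) i) * sigD c (x + t • u) i u) t :=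
        by have hc := (hasDerivAt_Jfun (sig c (x + t • u) i)).comp t (hasDerivAt_s c x u i t); exact hc
      exact (hJ.const_mul (2 * (l i : ℝ))).mul (hasDerivAt_sdot c x u i t))
  refine h.congr_deriv ?_
  exact Finset.sum_congr rfl fun i _ => by ring

lemma g2_eq (l : Fin ℓ → ℤ) (c : Fin ℓ → Fin ℓ → ℤ) (x u : Fin ℓ → ℝ) (t : ℝ) :
    ∑ i, 2 * (l i : ℝ) *
        (Jd (sig c (x + t • u) i) * sigD c (x + t • u) i u * sigD c (x + t • u) i u
          + Jfun (sig c (x + t • u) i) * sdd c x u t i)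
      = ∑ i, 2 * mrec l c (x + t • u) i * Jd (sig c (x + t • u) i)
          * sigD c (x + t • u) i u * sigD c (x + t • u) i u := by
  set τ := x + t • u with hτ
  have hsplit : ∑ i, 2 * (l i : ℝ) *
      (Jd (sig c τ i) * sigD c τ i u * sigD c τ i u + Jfun (sig c τ i) * sdd c x u t i)
      = (∑ i, 2 * (l i : ℝ) * Jd (sig c τ i) * sigD c τ i u * sigD c τ i u)
        + 2 * ∑ i, (l i : ℝ) * Jfun (sig c τ i) * sdd c x u t i := by
    rw [Finset.mul_sum, ← Finset.sum_add_distrib]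
    exact Finset.sum_congr rfl fun i _ => by ring
  rw [hsplit]
  have hkey := key_lemma l c τ (sdd c x u t)
    (fun i => -∑ j ∈ Finset.univ.filter (fun j => i < j),
      (c j i : ℝ) * (Jd (sig c τ j) * sigD c τ j u * sigD c τ j u))
    (fun i => by
      beta_reduce
      rw [sdd_eq, ← hτ]
      simp only [← Finset.sum_neg_distrib]
      rw [← Finset.sum_sub_distrib]
      exact Finset.sum_congr rfl fun j _ => by ring)
  beta_reduce at hkey
  rw [hkey]
  have hswap : ∑ i, mrec l c τ i * Jfun (sig c τ i) *
      (-∑ j ∈ Finset.univ.filter (fun j => i < j),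
        (c j i : ℝ) * (Jd (sig c τ j) * sigD c τ j u * sigD c τ j u))
      = -∑ j, ((l j : ℝ) - mrec l c τ j)
          * (Jd (sig c τ j) * sigD c τ j u * sigD c τ j u) := by
    rw [← swap_lemma l c τ (fun j => Jd (sig c τ j) * sigD c τ j u * sigD c τ j u)]
    rw [← Finset.sum_neg_distrib]
    exact Finset.sum_congr rfl fun i _ => by ring
  rw [hswap, mul_neg, ← sub_eq_add_neg, Finset.mul_sum, ← Finset.sum_sub_distrib]
  exact Finset.sum_congr rfl fun i _ => by ring

/-- Under the positivity condition, the Kähler potential `K_λ` is strictly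
convex on `ℝ^ℓ` (used in the proof of Theorem 7.3). -/
theorem kahler_potential_strictly_convex {ℓ : ℕ} (l : Fin ℓ → ℤ)
    (c : Fin ℓ → Fin ℓ → ℤ)
    (hpos : ∀ τ : Fin ℓ → ℝ, ∀ j : Fin ℓ, 0 < (l j : ℝ) - Lfun l c j τ) :
    StrictConvexOn ℝ Set.univ (Klam l c) := by
  have hm : ∀ (τ : Fin ℓ → ℝ) (j : Fin ℓ), 0 < mrec l c τ j := by
    intro τ j; rw [mrec_eq_sub]; exact hpos τ j
  constructor
  · exact convex_univ
  · intro x _ y _ hxy a b ha hb hab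
    set u : Fin ℓ → ℝ := y - x with hu
    have hune : u ≠ 0 := sub_ne_zero.mpr (Ne.symm hxy)
    set g : ℝ → ℝ := fun t => Klam l c (x + t • u) with hg
    have hder1 : deriv g = fun t =>
        ∑ i, 2 * (l i : ℝ) * Jfun (sig c (x + t • u) i) * sigD c (x + t • u) i u :=
      funext fun t => (hasDerivAt_g l c x u t).deriv
    have hdiff : Differentiable ℝ g := fun t => (hasDerivAt_g l c x u t).differentiableAt
    have hconv : StrictConvexOn ℝ Set.univ g := by
      apply strictConvexOn_of_deriv2_pos' convex_univ hdiff.continuous.continuousOn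
      intro t _
      have h2 : deriv^[2] g t = ∑ i, 2 * (l i : ℝ) *
          (Jd (sig c (x + t • u) i) * sigD c (x + t • u) i u * sigD c (x + t • u) i u
            + Jfun (sig c (x + t • u) i) * sdd c x u t i) := by
        show deriv (deriv g) t = _
        rw [hder1]
        exact (hasDerivAt_g1 l c x u t).deriv
      rw [h2, g2_eq l c x u t]
      set τt : Fin ℓ → ℝ := x + t • u with hτt
      have hwit : ∃ k : Fin ℓ, sigD c τt k u ≠ 0 := by
        by_contra hall
        push_neg at hall
        apply hune
        funext i
        have := sigD_apply c τt i u
        rw [hall i] at this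
        have hz : ∑ j ∈ Finset.univ.filter (fun j => i < j),
            (c j i : ℝ) * Jfun (sig c τt j) * sigD c τt j u = 0 :=
          Finset.sum_eq_zero fun j _ => by rw [hall j]; ring
        rw [hz] at this
        have : u i = 0 := by linarith
        simpa using this
      obtain ⟨k, hk⟩ := hwit
      apply Finset.sum_pos'
      · intro i _
        have h1 := hm τt i
        have h2 := Jd_pos (sig c τt i)
        have he : 2 * mrec l c τt i * Jd (sig c τt i) * sigD c τt i u * sigD c τt i u
            = (2 * mrec l c τt i * Jd (sig c τt i)) * (sigD c τt i u * sigD c τt i u) := by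
          ring
        rw [he]
        exact mul_nonneg (by positivity) (mul_self_nonneg _)
      · refine ⟨k, Finset.mem_univ k, ?_⟩
        have h1 := hm τt k
        have h2 := Jd_pos (sig c τt k)
        have h3 : 0 < sigD c τt k u * sigD c τt k u := mul_self_pos.mpr hk
        have he : 2 * mrec l c τt k * Jd (sig c τt k) * sigD c τt k u * sigD c τt k u
            = (2 * mrec l c τt k * Jd (sig c τt k)) * (sigD c τt k u * sigD c τt k u) := by
          ring
        rw [he]
        exact mul_pos (by positivity) h3
    have hres := hconv.2 (Set.mem_univ (0 : ℝ)) (Set.mem_univ (1 : ℝ))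
      (zero_ne_one) ha hb hab
    have e1 : a • (0 : ℝ) + b • (1 : ℝ) = b := by simp
    rw [e1] at hres
    have e2 : g 0 = Klam l c x := by
      show Klam l c (x + (0 : ℝ) • u) = Klam l c x
      congr 1
      funext i
      simp
    have e3 : g 1 = Klam l c y := by
      show Klam l c (x + (1 : ℝ) • u) = Klam l c y
      congr 1
      funext i
      rw [hu]
      simp
    have e4 : g b = Klam l c (a • x + b • y) := by
      show Klam l c (x + b • u) = Klam l c (a • x + b • y)
      congr 1
      funext i
      rw [hu]
      have hab' : a = 1 - b := by linarith
      simp [hab']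
      ring
    rw [e2, e3, e4] at hres
    simpa using hres
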